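/- Let G be a connected graph on m ≥ 2 vertices, and H a κ-regular graph on n vertices. Suppose QEC(G) > 0 and γ₃ := −2 − min ev(A_H) ≤ 0, and that −2 − ψ_H⁻¹(QEC(G)) ∉ ev(A_H). Then QEC(G⊙H) = ½[ (n+1)QEC(G) − (κ+2) + √( ((n+1)QEC(G) − (κ+2))² + 4(κ+2)QEC(G) ) ]. -/

import Mathlib

open Matrix BigOperators

/-- The join `K₁ + H` of a single vertex (labelled `none`) with `H`. -/
def joinOne {V₂ : Type*} (H : SimpleGraph V₂) : SimpleGraph (Option V₂) where
  Adj i j := (∃ a b, i = some a ∧ j = some b ∧ H.Adj a b) ∨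
    (i = none ∧ j ≠ none) ∨ (i ≠ none ∧ j = none)
  symm := by
    constructor
    rintro i j (⟨a, b, ha, hb, hab⟩ | ⟨h1, h2⟩ | ⟨h1, h2⟩)
    · exact Or.inl ⟨b, a, hb, ha, hab.symm⟩
    · exact Or.inr (Or.inr ⟨h2, h1⟩)
    · exact Or.inr (Or.inl ⟨h2, h1⟩)
  loopless := by
    constructor
    rintro i (⟨a, b, ha, hb, hab⟩ | ⟨h1, h2⟩ | ⟨h1, h2⟩)
    · rw [ha] at hb; injection hb with h; subst h; exact H.irrefl hab
    · exact h2 h1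
    · exact h1 h2

/-- The corona graph `G ⊙ H`, on vertex set `V₁ × ({o} ∪ V₂)` with `o = none`. -/
def corona {V₁ V₂ : Type*} (G : SimpleGraph V₁) (H : SimpleGraph V₂) :
    SimpleGraph (V₁ × Option V₂) where
  Adj p q := (p.2 = none ∧ q.2 = none ∧ G.Adj p.1 q.1) ∨
    (p.1 = q.1 ∧ (joinOne H).Adj p.2 q.2)
  symm := by
    constructor
    rintro p q (⟨h1, h2, h3⟩ | ⟨h1, h2⟩)
    · exact Or.inl ⟨h2, h1, h3.symm⟩
    · exact Or.inr ⟨h1.symm, (joinOne H).adj_symm h2⟩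
  loopless := by
    constructor
    rintro p (⟨_, _, h⟩ | ⟨_, h⟩)
    · exact G.irrefl h
    · exact (joinOne H).irrefl h

/-- The distance matrix of a graph, with real entries. -/
noncomputable def distMatrix {V : Type*} (G : SimpleGraph V) : Matrix V V ℝ :=
  fun x y => (G.dist x y : ℝ)

/-- The quadratic embedding constant of a graph:
`QEC(G) = max {⟨f, D f⟩ : ⟨f,f⟩ = 1, ⟨1,f⟩ = 0}`. -/
noncomputable def QEC {V : Type*} [Fintype V] (G : SimpleGraph V) : ℝ :=
  sSup {r : ℝ | ∃ f : V → ℝ, (∑ x, f x * f x) = 1 ∧ (∑ x, f x) = 0 ∧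
    r = f ⬝ᵥ (distMatrix G).mulVec f}


section Rayleigh
variable {V : Type*} [Fintype V] [DecidableEq V]

lemma rayleigh_lower (A : Matrix V V ℝ) (hA : A.IsHermitian) (μ : ℝ)
    (hmin : ∀ θ : ℝ, (∃ x : V → ℝ, x ≠ 0 ∧ A.mulVec x = θ • x) → μ ≤ θ)
    (x : V → ℝ) : μ * (∑ i, x i * x i) ≤ x ⬝ᵥ A.mulVec x := by
  have hB : (A - μ • (1 : Matrix V V ℝ)).IsHermitian := by
    refine hA.sub ?_
    simp [Matrix.IsHermitian, Matrix.conjTranspose_smul]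
  have heig : ∀ i, 0 ≤ hB.eigenvalues i := by
    intro i
    have hv : (A - μ • (1 : Matrix V V ℝ)) *ᵥ (⇑(hB.eigenvectorBasis i) : V → ℝ) =
        hB.eigenvalues i • (⇑(hB.eigenvectorBasis i) : V → ℝ) :=
      hB.mulVec_eigenvectorBasis i
    rw [Matrix.sub_mulVec, Matrix.smul_mulVec, Matrix.one_mulVec, sub_eq_iff_eq_add] at hv
    have hAv : A *ᵥ (⇑(hB.eigenvectorBasis i) : V → ℝ) =
        (hB.eigenvalues i + μ) • (⇑(hB.eigenvectorBasis i) : V → ℝ) := by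
      rw [hv, add_smul]
    have hne : (⇑(hB.eigenvectorBasis i) : V → ℝ) ≠ 0 :=
      fun h => hB.eigenvectorBasis.orthonormal.ne_zero i (by ext j; exact congrFun h j)
    have := hmin _ ⟨_, hne, hAv⟩
    linarith
  have hPSD : (A - μ • (1 : Matrix V V ℝ)).PosSemidef :=
    hB.posSemidef_iff_eigenvalues_nonneg.mpr heig
  have h2 := hPSD.dotProduct_mulVec_nonneg x
  rw [star_trivial, Matrix.sub_mulVec, Matrix.smul_mulVec, Matrix.one_mulVec,
    dotProduct_sub, dotProduct_smul] at h2
  simp only [smul_eq_mul, dotProduct] at h2 ⊢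
  linarith

end Rayleigh

section QECbasic
variable {V : Type*} [Fintype V] [DecidableEq V]

lemma quad_continuous (M : Matrix V V ℝ) :
    Continuous (fun f : V → ℝ => f ⬝ᵥ M.mulVec f) := by
  simp only [dotProduct, Matrix.mulVec]
  exact continuous_finset_sum _ fun x _ => (continuous_apply x).mul
    (continuous_finset_sum _ fun y _ => (continuous_const.mul (continuous_apply y)))

lemma qec_isGreatest (G : SimpleGraph V) (hm : 2 ≤ Fintype.card V) :
    IsGreatest {r : ℝ | ∃ f : V → ℝ, (∑ x, f x * f x) = 1 ∧ (∑ x, f x) = 0 ∧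
      r = f ⬝ᵥ (distMatrix G).mulVec f} (QEC G) := by
  classical
  set K : Set (V → ℝ) := {f | (∑ x, f x * f x) = 1 ∧ (∑ x, f x) = 0} with hK
  set φ : (V → ℝ) → ℝ := fun f => f ⬝ᵥ (distMatrix G).mulVec f with hφ
  have hSeq : {r : ℝ | ∃ f : V → ℝ, (∑ x, f x * f x) = 1 ∧ (∑ x, f x) = 0 ∧
      r = f ⬝ᵥ (distMatrix G).mulVec f} = φ '' K := by
    ext r
    constructor
    · rintro ⟨f, h1, h2, h3⟩; exact ⟨f, ⟨h1, h2⟩, h3.symm⟩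
    · rintro ⟨f, ⟨h1, h2⟩, h3⟩; exact ⟨f, h1, h2, h3.symm⟩
  -- K is nonempty
  obtain ⟨u, v, huv⟩ := Fintype.exists_pair_of_one_lt_card (α := V) (by omega)
  have ha : Real.sqrt 2⁻¹ * Real.sqrt 2⁻¹ = 2⁻¹ := Real.mul_self_sqrt (by norm_num)
  have hKne : K.Nonempty := by
    refine ⟨fun x => (if x = u then Real.sqrt 2⁻¹ else 0) +
      (if x = v then -Real.sqrt 2⁻¹ else 0), ?_, ?_⟩
    · have hpt : ∀ x : V, ((if x = u then Real.sqrt 2⁻¹ else 0) +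
        (if x = v then -Real.sqrt 2⁻¹ else 0)) *
        ((if x = u then Real.sqrt 2⁻¹ else 0) + (if x = v then -Real.sqrt 2⁻¹ else 0)) =
        (if x = u then Real.sqrt 2⁻¹ * Real.sqrt 2⁻¹ else 0) +
        (if x = v then Real.sqrt 2⁻¹ * Real.sqrt 2⁻¹ else 0) := by
        intro x
        split_ifs with h1 h2
        · exact absurd (h1.symm.trans h2) huv
        · ring
        · ring
        · ring
      rw [Finset.sum_congr rfl fun x _ => hpt x, Finset.sum_add_distrib,
        Finset.sum_ite_eq' Finset.univ u, Finset.sum_ite_eq' Finset.univ v]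
      simp only [Finset.mem_univ, if_true]
      rw [ha]; norm_num
    · rw [Finset.sum_add_distrib, Finset.sum_ite_eq' Finset.univ u,
        Finset.sum_ite_eq' Finset.univ v]
      simp
  -- K is compact
  have hKcl : IsClosed K := by
    have h1 : IsClosed {f : V → ℝ | (∑ x, f x * f x) = 1} :=
      isClosed_eq (continuous_finset_sum _ fun x _ => (continuous_apply x).mul
        (continuous_apply x)) continuous_const
    have h2 : IsClosed {f : V → ℝ | (∑ x, f x) = 0} :=
      isClosed_eq (continuous_finset_sum _ fun x _ => continuous_apply x) continuous_const
    exact h1.inter h2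
  have hKsub : K ⊆ Metric.closedBall 0 1 := by
    rintro f ⟨h1, _⟩
    rw [Metric.mem_closedBall]
    refine (dist_pi_le_iff zero_le_one).2 fun x => ?_
    rw [Real.dist_eq, Pi.zero_apply, sub_zero, abs_le_one_iff_mul_self_le_one]
    calc f x * f x ≤ ∑ y, f y * f y :=
          Finset.single_le_sum (fun y _ => mul_self_nonneg (f y)) (Finset.mem_univ x)
      _ = 1 := h1
  have hKcomp : IsCompact K :=
    (isCompact_closedBall _ _).of_isClosed_subset hKcl hKsub
  have himg : IsCompact (φ '' K) := hKcomp.image (quad_continuous _)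
  have hne : (φ '' K).Nonempty := hKne.image _
  rw [QEC, hSeq]
  exact ⟨himg.sSup_mem hne, fun r hr => le_csSup himg.bddAbove hr⟩

lemma smul_quad (M : Matrix V V ℝ) (a : ℝ) (f : V → ℝ) :
    (a • f) ⬝ᵥ M.mulVec (a • f) = a * a * (f ⬝ᵥ M.mulVec f) := by
  rw [Matrix.mulVec_smul, dotProduct_smul, smul_dotProduct]
  simp [smul_eq_mul]; ring

lemma mem_qec_set (G : SimpleGraph V) (f : V → ℝ) (c : ℝ) (hc : 0 < c)
    (h1 : (∑ x, f x * f x) = c) (h2 : (∑ x, f x) = 0) :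
    (f ⬝ᵥ (distMatrix G).mulVec f) / c ∈ {r : ℝ | ∃ f : V → ℝ, (∑ x, f x * f x) = 1 ∧
      (∑ x, f x) = 0 ∧ r = f ⬝ᵥ (distMatrix G).mulVec f} := by
  have hcs : Real.sqrt c > 0 := Real.sqrt_pos.2 hc
  refine ⟨(Real.sqrt c)⁻¹ • f, ?_, ?_, ?_⟩
  · have : ∀ x, ((Real.sqrt c)⁻¹ • f) x * ((Real.sqrt c)⁻¹ • f) x =
        (Real.sqrt c)⁻¹ * (Real.sqrt c)⁻¹ * (f x * f x) := by
      intro x; simp [smul_eq_mul]; ring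
    rw [Finset.sum_congr rfl fun x _ => this x, ← Finset.mul_sum, h1]
    rw [← mul_inv, Real.mul_self_sqrt hc.le]
    field_simp
  · simp only [Pi.smul_apply, smul_eq_mul, ← Finset.mul_sum, h2, mul_zero]
  · rw [smul_quad, ← mul_inv, Real.mul_self_sqrt hc.le, div_eq_inv_mul]

lemma qec_quad_le (G : SimpleGraph V) (hm : 2 ≤ Fintype.card V) (f : V → ℝ)
    (h2 : (∑ x, f x) = 0) :
    f ⬝ᵥ (distMatrix G).mulVec f ≤ QEC G * (∑ x, f x * f x) := by
  rcases eq_or_lt_of_le (Finset.sum_nonneg fun x _ => mul_self_nonneg (f x) :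
      (0:ℝ) ≤ ∑ x, f x * f x) with hc | hc
  · have hf0 : ∀ x ∈ Finset.univ, f x * f x = 0 :=
      fun x _ => le_antisymm (hc ▸ Finset.single_le_sum
        (fun y _ => mul_self_nonneg (f y)) (Finset.mem_univ x)) (mul_self_nonneg _)
    have hf : f = 0 := by
      funext x
      exact mul_self_eq_zero.1 (hf0 x (Finset.mem_univ x))
    subst hf
    simp
  · have hmem := mem_qec_set G f _ hc rfl h2
    have := (qec_isGreatest G hm).2 hmem
    rw [div_le_iff₀ hc] at this
    linarith [this]

end QECbasic

def cOpt {V₂ : Type*} : Option V₂ → ℕ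
  | none => 0
  | some _ => 1

def wOpt {V₂ : Type*} [DecidableEq V₂] (H : SimpleGraph V₂) [DecidableRel H.Adj] :
    Option V₂ → Option V₂ → ℕ
  | none, none => 0
  | none, some _ => 1
  | some _, none => 1
  | some a, some b => if a = b then 0 else if H.Adj a b then 1 else 2

section Dist
variable {V₁ V₂ : Type*} [DecidableEq V₁] [DecidableEq V₂] (G : SimpleGraph V₁) (H : SimpleGraph V₂)
  [DecidableRel H.Adj]

lemma cOpt_none : cOpt (none : Option V₂) = 0 := rfl
lemma cOpt_some (a : V₂) : cOpt (some a) = 1 := rfl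

lemma cOpt_le_one : ∀ x : Option V₂, cOpt x ≤ 1 := by rintro (_|a) <;> simp [cOpt]

lemma wOpt_le_two : ∀ x y : Option V₂, wOpt H x y ≤ 2 := by
  rintro (_|a) (_|b) <;> simp [wOpt] <;> split_ifs <;> omega

lemma wOpt_self : ∀ x : Option V₂, wOpt H x x = 0 := by
  rintro (_|a) <;> simp [wOpt]

lemma one_le_wOpt : ∀ x y : Option V₂, x ≠ y → 1 ≤ wOpt H x y := by
  rintro (_|a) (_|b) h
  · exact absurd rfl h
  · simp [wOpt]
  · simp [wOpt]
  · have hab : a ≠ b := fun hh => h (hh ▸ rfl)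
    simp only [wOpt, if_neg hab]
    split_ifs <;> omega

lemma wOpt_le_one_of_adj : ∀ x y : Option V₂, (joinOne H).Adj x y → wOpt H x y ≤ 1 := by
  rintro (_|a) (_|b) h
  · simp [wOpt]
  · simp [wOpt]
  · simp [wOpt]
  · rcases h with ⟨a', b', ha, hb, hab⟩ | ⟨h1, h2⟩ | ⟨h1, h2⟩
    · injection ha with ha; injection hb with hb; subst ha; subst hb
      simp only [wOpt]
      split_ifs <;> omega
    · simp at h1
    · simp at h2

/-- Key lower bound: every walk in the corona from `p` to `q` has length at least `T p q`. -/
lemma corona_walk_length_le (hG : G.Connected) :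
    ∀ {p q : V₁ × Option V₂} (W : (corona G H).Walk p q),
      (if p.1 = q.1 then wOpt H p.2 q.2 else G.dist p.1 q.1 + cOpt p.2 + cOpt q.2) ≤
        W.length := by
  intro p q W
  induction W with
  | nil => simp [wOpt_self]
  | @cons p r q h W ih =>
    rw [SimpleGraph.Walk.length_cons]
    rcases h with ⟨hp2, hr2, hadj⟩ | ⟨hpr, hadj⟩
    · -- root-root step
      have hpr : p.1 ≠ r.1 := hadj.ne
      by_cases hpq : p.1 = q.1
      · -- p.1 = q.1, r.1 ≠ q.1
        have hrq : r.1 ≠ q.1 := fun h => hpr (hpq.trans h.symm)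
        rw [if_pos hpq, hp2]
        rw [if_neg hrq, hr2] at ih
        have h1 : 1 ≤ G.dist r.1 q.1 := hG.pos_dist_of_ne hrq
        have h2 : wOpt H none q.2 ≤ cOpt q.2 := by
          rcases q.2 with _ | b <;> simp [wOpt, cOpt]
        rw [cOpt_none] at ih
        omega
      · rw [if_neg hpq, hp2]
        have htri : G.dist p.1 q.1 ≤ 1 + G.dist r.1 q.1 := by
          have := hG.dist_triangle (u := p.1) (v := r.1) (w := q.1)
          have h1 : G.dist p.1 r.1 = 1 := SimpleGraph.dist_eq_one_iff_adj.2 hadj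
          omega
        by_cases hrq : r.1 = q.1
        · rw [if_pos hrq] at ih
          have h2 : wOpt H r.2 q.2 = cOpt q.2 := by
            rw [hr2]; rcases q.2 with _ | b <;> simp [wOpt, cOpt]
          have h3 : G.dist p.1 q.1 ≤ 1 := by
            rw [← hrq]; exact le_of_eq (SimpleGraph.dist_eq_one_iff_adj.2 (hrq ▸ hadj))
          rw [cOpt_none]
          have := cOpt_le_one q.2
          omega
        · rw [if_neg hrq, hr2] at ih
          rw [cOpt_none] at ih ⊢
          omega
    · -- same-copy step
      by_cases hpq : p.1 = q.1
      · have hrq : r.1 = q.1 := hpr.symm.trans hpq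
        rw [if_pos hpq]
        rw [if_pos hrq] at ih
        by_cases hr2q : r.2 = q.2
        · have : wOpt H p.2 q.2 ≤ 1 := hr2q ▸ wOpt_le_one_of_adj H p.2 r.2 hadj
          omega
        · have h1 : 1 ≤ wOpt H r.2 q.2 := one_le_wOpt H _ _ hr2q
          have h2 : wOpt H p.2 q.2 ≤ 2 := wOpt_le_two H _ _
          omega
      · have hrq : r.1 ≠ q.1 := fun h => hpq (hpr.trans h)
        rw [if_neg hpq]
        rw [if_neg hrq, ← hpr] at ih
        have := cOpt_le_one p.2
        have := cOpt_le_one (V₂ := V₂) r.2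
        omega

/-- The root embedding `G →g corona G H`. -/
@[reducible] def rootHom : G →g corona G H where
  toFun u := (u, none)
  map_rel' := fun h => Or.inl ⟨rfl, rfl, h⟩

lemma corona_adj_root_some (u : V₁) (a : V₂) :
    (corona G H).Adj (u, none) (u, some a) :=
  Or.inr ⟨rfl, Or.inr (Or.inl ⟨rfl, by simp⟩)⟩

lemma corona_adj_some_root (u : V₁) (a : V₂) :
    (corona G H).Adj (u, some a) (u, none) :=
  Or.inr ⟨rfl, Or.inr (Or.inr ⟨by simp, rfl⟩)⟩

lemma corona_adj_some_some (u : V₁) {a b : V₂} (h : H.Adj a b) :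
    (corona G H).Adj (u, some a) (u, some b) :=
  Or.inr ⟨rfl, Or.inl ⟨a, b, rfl, rfl, h⟩⟩

lemma corona_dist (hG : G.Connected) (p q : V₁ × Option V₂) :
    (corona G H).dist p q =
      (if p.1 = q.1 then wOpt H p.2 q.2 else G.dist p.1 q.1 + cOpt p.2 + cOpt q.2) := by
  obtain ⟨u, x⟩ := p
  obtain ⟨v, y⟩ := q
  -- first: an explicit walk of the right length
  have hup : ∃ W : (corona G H).Walk (u, x) (v, y),
      W.length = (if (u, x).1 = (v, y).1 then wOpt H x y
        else G.dist u v + cOpt x + cOpt y) := by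
    by_cases huv : u = v
    · subst huv
      simp only [if_pos rfl]
      match x, y with
      | none, none => exact ⟨SimpleGraph.Walk.nil, by simp [wOpt]⟩
      | none, some b => exact ⟨SimpleGraph.Walk.cons (corona_adj_root_some G H u b)
          SimpleGraph.Walk.nil, by simp [wOpt]⟩
      | some a, none => exact ⟨SimpleGraph.Walk.cons (corona_adj_some_root G H u a)
          SimpleGraph.Walk.nil, by simp [wOpt]⟩
      | some a, some b =>
        by_cases hab : a = b
        · subst hab; exact ⟨SimpleGraph.Walk.nil, by simp [wOpt]⟩
        · by_cases hadj : H.Adj a b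
          · exact ⟨SimpleGraph.Walk.cons (corona_adj_some_some G H u hadj)
              SimpleGraph.Walk.nil, by simp [wOpt, hab, hadj]⟩
          · exact ⟨SimpleGraph.Walk.cons (corona_adj_some_root G H u a)
              (SimpleGraph.Walk.cons (corona_adj_root_some G H u b)
                SimpleGraph.Walk.nil), by simp [wOpt, hab, hadj]⟩
    · obtain ⟨P, hP⟩ := hG.exists_walk_length_eq_dist u v
      have hM : (P.map (rootHom G H)).length = G.dist u v := by
        rw [SimpleGraph.Walk.length_map]; exact hP
      simp only [if_neg huv]
      match x, y with
      | none, none => exact ⟨P.map (rootHom G H), by simp only [SimpleGraph.Walk.length_cons, SimpleGraph.Walk.length_concat, hM, cOpt_none, cOpt_some] <;> omega⟩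
      | none, some b => exact ⟨(P.map (rootHom G H)).concat (corona_adj_root_some G H v b),
          by simp only [SimpleGraph.Walk.length_cons, SimpleGraph.Walk.length_concat, hM, cOpt_none, cOpt_some] <;> omega⟩
      | some a, none => exact ⟨SimpleGraph.Walk.cons (corona_adj_some_root G H u a)
            (P.map (rootHom G H)),
          by simp only [SimpleGraph.Walk.length_cons, SimpleGraph.Walk.length_concat, hM, cOpt_none, cOpt_some] <;> omega⟩
      | some a, some b => exact ⟨SimpleGraph.Walk.cons (corona_adj_some_root G H u a)
          ((P.map (rootHom G H)).concat (corona_adj_root_some G H v b)),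
          by simp only [SimpleGraph.Walk.length_cons, SimpleGraph.Walk.length_concat, hM,
            cOpt_none, cOpt_some] <;> omega⟩
  obtain ⟨W, hW⟩ := hup
  have hle : (corona G H).dist (u, x) (v, y) ≤ _ := hW ▸ SimpleGraph.dist_le W
  have hreach : (corona G H).Reachable (u, x) (v, y) := W.reachable
  obtain ⟨Wm, hWm⟩ := hreach.exists_walk_length_eq_dist
  have hge := corona_walk_length_le G H hG Wm
  rw [hWm] at hge
  dsimp only at hge hle ⊢
  omega

end Dist

section Quad
variable {V₁ V₂ : Type*} [Fintype V₁] [Fintype V₂] [DecidableEq V₁] [DecidableEq V₂]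
  (G : SimpleGraph V₁) (H : SimpleGraph V₂) [DecidableRel H.Adj]

lemma sum_prod_option' (g : V₁ × Option V₂ → ℝ) :
    ∑ p, g p = ∑ u, (g (u, none) + ∑ a, g (u, some a)) := by
  rw [Fintype.sum_prod_type]
  exact Finset.sum_congr rfl fun u _ => Fintype.sum_option _

lemma dot_mulVec_expand {ι : Type*} [Fintype ι] (M : Matrix ι ι ℝ) (f : ι → ℝ) :
    f ⬝ᵥ M.mulVec f = ∑ p, ∑ q, M p q * (f p * f q) := by
  simp only [dotProduct, Matrix.mulVec, Finset.mul_sum]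
  exact Finset.sum_congr rfl fun p _ => Finset.sum_congr rfl fun q _ => by ring

lemma distMatrix_corona (hG : G.Connected) (p q : V₁ × Option V₂) :
    distMatrix (corona G H) p q = (G.dist p.1 q.1 : ℝ) + (cOpt p.2 : ℝ) + (cOpt q.2 : ℝ) +
      (if p.1 = q.1 then ((wOpt H p.2 q.2 : ℝ) - (cOpt p.2 : ℝ) - (cOpt q.2 : ℝ)) else 0) := by
  rw [distMatrix]
  rw [corona_dist G H hG]
  by_cases h : p.1 = q.1
  · rw [if_pos h, if_pos h]
    have h0 : G.dist p.1 q.1 = 0 := by rw [h, SimpleGraph.dist_self]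
    rw [h0]
    push_cast
    ring
  · rw [if_neg h, if_neg h]
    push_cast
    ring

lemma E_some_some (a b : V₂) :
    (wOpt H (some a) (some b) : ℝ) - (cOpt (some a) : ℝ) - (cOpt (some b) : ℝ) =
      -(if a = b then (2:ℝ) else 0) - (H.adjMatrix ℝ) a b := by
  by_cases hab : a = b
  · subst hab
    simp [wOpt, cOpt, SimpleGraph.adjMatrix]
    norm_num
  · by_cases hadj : H.Adj a b
    · simp [wOpt, cOpt, hab, hadj, SimpleGraph.adjMatrix]
    · simp [wOpt, cOpt, hab, hadj, SimpleGraph.adjMatrix]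
      norm_num

/-- The grand decomposition of the corona quadratic form. -/
lemma corona_quad (hG : G.Connected) (f : V₁ × Option V₂ → ℝ) :
    f ⬝ᵥ (distMatrix (corona G H)).mulVec f =
      (fun u => f (u, none) + ∑ a, f (u, some a)) ⬝ᵥ
        (distMatrix G).mulVec (fun u => f (u, none) + ∑ a, f (u, some a))
      + 2 * (∑ u, ∑ a, f (u, some a)) * (∑ u, (f (u, none) + ∑ a, f (u, some a)))
      - ∑ u, (2 * (∑ a, f (u, some a) * f (u, some a))
          + (fun a => f (u, some a)) ⬝ᵥ (H.adjMatrix ℝ).mulVec (fun a => f (u, some a))) := by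
  set β : V₁ → ℝ := fun u => f (u, none) + ∑ a, f (u, some a) with hβ
  set s : V₁ → ℝ := fun u => ∑ a, f (u, some a) with hs
  rw [dot_mulVec_expand]
  have hsplit : ∀ p q : V₁ × Option V₂,
      distMatrix (corona G H) p q * (f p * f q) =
      (G.dist p.1 q.1 : ℝ) * (f p * f q) + (cOpt p.2 : ℝ) * (f p * f q)
      + (cOpt q.2 : ℝ) * (f p * f q)
      + (if p.1 = q.1 then ((wOpt H p.2 q.2 : ℝ) - (cOpt p.2 : ℝ) - (cOpt q.2 : ℝ)) else 0)
          * (f p * f q) := by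
    intro p q
    rw [distMatrix_corona G H hG]
    ring
  rw [Finset.sum_congr rfl fun p _ => Finset.sum_congr rfl fun q _ => hsplit p q]
  simp only [Finset.sum_add_distrib]
  -- Σ1
  have hS1 : ∑ p : V₁ × Option V₂, ∑ q : V₁ × Option V₂,
      (G.dist p.1 q.1 : ℝ) * (f p * f q) = β ⬝ᵥ (distMatrix G).mulVec β := by
    have inner : ∀ p : V₁ × Option V₂,
        ∑ q : V₁ × Option V₂, (G.dist p.1 q.1 : ℝ) * (f p * f q) =
        f p * ∑ v, (G.dist p.1 v : ℝ) * β v := by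
      intro p
      rw [Fintype.sum_prod_type, Finset.mul_sum]
      refine Finset.sum_congr rfl fun v _ => ?_
      rw [Fintype.sum_option]
      have : ∀ a : V₂, (G.dist p.1 v : ℝ) * (f p * f (v, some a)) =
          ((G.dist p.1 v : ℝ) * f p) * f (v, some a) := fun a => by ring
      rw [Finset.sum_congr rfl fun a _ => this a, ← Finset.mul_sum]
      simp only [hβ]
      ring
    rw [Finset.sum_congr rfl fun p _ => inner p]
    rw [sum_prod_option']
    simp only [dotProduct, Matrix.mulVec, distMatrix]
    refine Finset.sum_congr rfl fun u _ => ?_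
    simp only [hβ]
    rw [← Finset.sum_mul]
    ring
  -- Σ2
  have hcount : ∀ p : V₁ × Option V₂, ∀ c : ℝ,
      (∑ q : V₁ × Option V₂, (cOpt p.2 : ℝ) * (f p * f q)) =
        ((cOpt p.2 : ℝ) * f p) * ∑ q, f q := by
    intro p c
    rw [Finset.mul_sum]
    exact Finset.sum_congr rfl fun q _ => by ring
  have hsum_c : (∑ p : V₁ × Option V₂, (cOpt p.2 : ℝ) * f p) = ∑ u, s u := by
    rw [sum_prod_option']
    refine Finset.sum_congr rfl fun u _ => ?_
    simp only [cOpt_none, cOpt_some, Nat.cast_zero, Nat.cast_one, zero_mul, one_mul, zero_add,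
      hs]
  have hsum_f : (∑ q : V₁ × Option V₂, f q) = ∑ u, β u := by
    rw [sum_prod_option']
  have hS2 : ∑ p : V₁ × Option V₂, ∑ q : V₁ × Option V₂,
      (cOpt p.2 : ℝ) * (f p * f q) = (∑ u, s u) * (∑ u, β u) := by
    rw [Finset.sum_congr rfl fun p _ => hcount p 0, ← Finset.sum_mul, hsum_c, hsum_f]
  have hS3 : ∑ p : V₁ × Option V₂, ∑ q : V₁ × Option V₂,
      (cOpt q.2 : ℝ) * (f p * f q) = (∑ u, s u) * (∑ u, β u) := by
    rw [Finset.sum_comm]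
    have : ∀ q : V₁ × Option V₂,
        (∑ p : V₁ × Option V₂, (cOpt q.2 : ℝ) * (f p * f q)) =
        ((cOpt q.2 : ℝ) * f q) * ∑ p, f p := by
      intro q
      rw [Finset.mul_sum]
      exact Finset.sum_congr rfl fun p _ => by ring
    rw [Finset.sum_congr rfl fun q _ => this q, ← Finset.sum_mul, hsum_c, hsum_f]
  -- Σ4
  have hS4 : ∑ p : V₁ × Option V₂, ∑ q : V₁ × Option V₂,
      (if p.1 = q.1 then ((wOpt H p.2 q.2 : ℝ) - (cOpt p.2 : ℝ) - (cOpt q.2 : ℝ)) else 0)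
        * (f p * f q) =
      ∑ u, -(2 * (∑ a, f (u, some a) * f (u, some a))
          + (fun a => f (u, some a)) ⬝ᵥ (H.adjMatrix ℝ).mulVec (fun a => f (u, some a))) := by
    have inner : ∀ p : V₁ × Option V₂,
        (∑ q : V₁ × Option V₂,
          (if p.1 = q.1 then ((wOpt H p.2 q.2 : ℝ) - (cOpt p.2 : ℝ) - (cOpt q.2 : ℝ)) else 0)
            * (f p * f q)) =
        ∑ y, ((wOpt H p.2 y : ℝ) - (cOpt p.2 : ℝ) - (cOpt y : ℝ)) * (f p * f (p.1, y)) := by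
      intro p
      rw [Fintype.sum_prod_type]
      have hv : ∀ v : V₁,
          (∑ y, (if p.1 = v then ((wOpt H p.2 y : ℝ) - (cOpt p.2 : ℝ) - (cOpt y : ℝ)) else 0)
            * (f p * f (v, y))) =
          if p.1 = v then
            ∑ y, ((wOpt H p.2 y : ℝ) - (cOpt p.2 : ℝ) - (cOpt y : ℝ)) * (f p * f (v, y))
          else 0 := by
        intro v
        split_ifs with h
        · rfl
        · simp
      rw [Finset.sum_congr rfl fun v _ => hv v, Finset.sum_ite_eq]
      simp
    rw [Finset.sum_congr rfl fun p _ => inner p]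
    rw [sum_prod_option']
    refine Finset.sum_congr rfl fun u _ => ?_
    -- the `none` part vanishes
    have hnone : (∑ y : Option V₂, ((wOpt H none y : ℝ) - (cOpt (none : Option V₂) : ℝ)
        - (cOpt y : ℝ)) * (f (u, none) * f (u, y))) = 0 := by
      rw [Fintype.sum_option]
      simp [wOpt, cOpt]
    have hsome : ∀ a : V₂, (∑ y : Option V₂, ((wOpt H (some a) y : ℝ) - (cOpt (some a) : ℝ)
        - (cOpt y : ℝ)) * (f (u, some a) * f (u, y))) =
        ∑ b, (-(if a = b then (2:ℝ) else 0) - (H.adjMatrix ℝ) a b)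
          * (f (u, some a) * f (u, some b)) := by
      intro a
      rw [Fintype.sum_option]
      have h0 : ((wOpt H (some a) none : ℝ) - (cOpt (some a) : ℝ) - (cOpt (none : Option V₂) : ℝ))
          = 0 := by simp [wOpt, cOpt]
      rw [h0, zero_mul, zero_add]
      exact Finset.sum_congr rfl fun b _ => by rw [E_some_some]
    rw [hnone, zero_add, Finset.sum_congr rfl fun a _ => hsome a]
    -- now pure algebra over V₂ sums
    have expand : ∀ a : V₂, (∑ b, (-(if a = b then (2:ℝ) else 0) - (H.adjMatrix ℝ) a b)
        * (f (u, some a) * f (u, some b))) =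
        (∑ b, -((if a = b then (2:ℝ) else 0) * (f (u, some a) * f (u, some b))))
        - f (u, some a) * (∑ b, (H.adjMatrix ℝ) a b * f (u, some b)) := by
      intro a
      rw [Finset.mul_sum, ← Finset.sum_sub_distrib]
      refine Finset.sum_congr rfl fun b _ => by ring
    rw [Finset.sum_congr rfl fun a _ => expand a, Finset.sum_sub_distrib]
    have hdiag1 : ∀ a : V₂, (∑ b, -((if a = b then (2:ℝ) else 0)
        * (f (u, some a) * f (u, some b)))) =
        -(2 * (f (u, some a) * f (u, some a))) := by
      intro a
      rw [Finset.sum_neg_distrib]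
      congr 1
      have hb : ∀ b : V₂, (if a = b then (2:ℝ) else 0) * (f (u, some a) * f (u, some b)) =
          if a = b then 2 * (f (u, some a) * f (u, some b)) else 0 := by
        intro b
        split_ifs <;> ring
      rw [Finset.sum_congr rfl fun b _ => hb b, Finset.sum_ite_eq]
      simp
    have hdiag : (∑ a, ∑ b, -((if a = b then (2:ℝ) else 0) * (f (u, some a) * f (u, some b))))
        = -(2 * ∑ a, f (u, some a) * f (u, some a)) := by
      rw [Finset.sum_congr rfl fun a _ => hdiag1 a, Finset.sum_neg_distrib]
      congr 1
      rw [Finset.mul_sum]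
    rw [hdiag]
    simp only [dotProduct, Matrix.mulVec]
    ring
  rw [hS1, hS2, hS3, hS4]
  rw [Finset.sum_neg_distrib]
  have e1 : (∑ u : V₁, (f (u, none) + ∑ a, f (u, some a))) = ∑ u, β u :=
    Finset.sum_congr rfl fun u _ => rfl
  have e2 : (∑ u : V₁, ∑ a, f (u, some a)) = ∑ u, s u :=
    Finset.sum_congr rfl fun u _ => rfl
  rw [e1, e2]
  simp only [Finset.sum_add_distrib, ← Finset.sum_mul, ← Finset.mul_sum]
  ring
end Quad


lemma dot_mulVec_expand' {ι : Type*} [Fintype ι] (M : Matrix ι ι ℝ) (f : ι → ℝ) :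
    f ⬝ᵥ M.mulVec f = ∑ p, ∑ q, M p q * (f p * f q) := by
  simp only [dotProduct, Matrix.mulVec, Finset.mul_sum]
  exact Finset.sum_congr rfl fun p _ => Finset.sum_congr rfl fun q _ => by ring

section Copy
variable {V₂ : Type*} [Fintype V₂] [DecidableEq V₂] (H : SimpleGraph V₂) [DecidableRel H.Adj]

lemma adj_row_sum {κ : ℕ} (hreg : H.IsRegularOfDegree κ) (a : V₂) :
    ∑ b, (H.adjMatrix ℝ) a b = (κ : ℝ) := by
  have := SimpleGraph.adjMatrix_mulVec_const_apply_of_regular (α := ℝ) (a := 1) hreg (v := a)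
  simpa [Matrix.mulVec, dotProduct] using this

lemma adjMatrix_herm : (H.adjMatrix ℝ).IsHermitian := by
  ext a b
  simp [Matrix.conjTranspose_apply, SimpleGraph.adjMatrix_apply, H.adj_comm a b]

lemma adj_col_sum {κ : ℕ} (hreg : H.IsRegularOfDegree κ) (b : V₂) :
    ∑ a, (H.adjMatrix ℝ) a b = (κ : ℝ) := by
  have : ∀ a, (H.adjMatrix ℝ) a b = (H.adjMatrix ℝ) b a := by
    intro a; simp [SimpleGraph.adjMatrix_apply, H.adj_comm]
  rw [Finset.sum_congr rfl fun a _ => this a]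
  exact adj_row_sum H hreg b

lemma copy_bound (κ : ℕ) (hreg : H.IsRegularOfDegree κ) (μmin : ℝ)
    (hmin2 : ∀ θ : ℝ, (∃ x : V₂ → ℝ, x ≠ 0 ∧ (H.adjMatrix ℝ).mulVec x = θ • x) → μmin ≤ θ)
    (hμ : -2 ≤ μmin) (hne : Nonempty V₂) (q lam : ℝ) (hq : 0 < q) (hlam : q < lam)
    (hdet : (lam - q) * (lam + (κ : ℝ) + 2 - q * (Fintype.card V₂ : ℝ)) =
      q ^ 2 * (Fintype.card V₂ : ℝ))
    (α : ℝ) (F : V₂ → ℝ) :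
    q * (α + ∑ a, F a) ^ 2 ≤ lam * α ^ 2 + (lam + 2) * (∑ a, F a * F a)
      + F ⬝ᵥ (H.adjMatrix ℝ).mulVec F := by
  set n : ℝ := (Fintype.card V₂ : ℝ) with hn
  have hn1 : (1 : ℝ) ≤ n := by
    rw [hn]; exact_mod_cast Fintype.card_pos_iff.2 hne
  have hn0 : n ≠ 0 := by linarith
  set s : ℝ := ∑ a, F a with hsdef
  set c : ℝ := s / n with hc
  have hnc : n * c = s := by rw [hc]; field_simp
  set g : V₂ → ℝ := fun a => F a - c with hg
  have hFg : ∀ a, F a = g a + c := fun a => by rw [hg]; ring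
  have hsg : ∑ a, g a = 0 := by
    have h1 : ∑ a, g a = s - n * c := by
      rw [hg, Finset.sum_sub_distrib, Finset.sum_const, Finset.card_univ, nsmul_eq_mul,
        ← hsdef, ← hn]
    rw [h1, hnc]
    ring
  set Γ : ℝ := ∑ a, g a * g a with hΓ
  have hΓ0 : 0 ≤ Γ := Finset.sum_nonneg fun a _ => mul_self_nonneg _
  have hFF : ∑ a, F a * F a = Γ + n * c ^ 2 := by
    have : ∀ a, F a * F a = g a * g a + 2 * c * g a + c ^ 2 := by
      intro a; rw [hFg a]; ring
    rw [Finset.sum_congr rfl fun a _ => this a, Finset.sum_add_distrib,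
      Finset.sum_add_distrib, Finset.sum_const, Finset.card_univ, nsmul_eq_mul, ← Finset.mul_sum,
      hsg, ← hΓ]
    ring
  -- decompose the adjacency quadratic form
  set A : Matrix V₂ V₂ ℝ := H.adjMatrix ℝ with hA
  have hrow : ∀ a, ∑ b, A a b = (κ : ℝ) := adj_row_sum H hreg
  have hcol : ∀ b, ∑ a, A a b = (κ : ℝ) := adj_col_sum H hreg
  have hh : F ⬝ᵥ A.mulVec F = (g ⬝ᵥ A.mulVec g) + (κ : ℝ) * (n * c ^ 2) := by
    rw [dot_mulVec_expand', dot_mulVec_expand']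
    have hpt : ∀ a b, A a b * (F a * F b) =
        A a b * (g a * g b) + c * (A a b * g a) + c * (A a b * g b) + c ^ 2 * A a b := by
      intro a b; rw [hFg a, hFg b]; ring
    rw [Finset.sum_congr rfl fun a _ => Finset.sum_congr rfl fun b _ => hpt a b]
    simp only [Finset.sum_add_distrib]
    have h2 : ∑ a, ∑ b, c * (A a b * g a) = 0 := by
      have : ∀ a, ∑ b, c * (A a b * g a) = (c * g a) * (κ : ℝ) := by
        intro a
        rw [show (fun b => c * (A a b * g a)) = fun b => (c * g a) * A a b from
          funext fun b => by ring, ← Finset.mul_sum, hrow]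
      rw [Finset.sum_congr rfl fun a _ => this a]
      rw [show (fun a => (c * g a) * (κ:ℝ)) = fun a => (c * (κ:ℝ)) * g a from
        funext fun a => by ring, ← Finset.mul_sum, hsg, mul_zero]
    have h3 : ∑ a, ∑ b, c * (A a b * g b) = 0 := by
      rw [Finset.sum_comm]
      have : ∀ b, ∑ a, c * (A a b * g b) = (c * g b) * (κ : ℝ) := by
        intro b
        rw [show (fun a => c * (A a b * g b)) = fun a => (c * g b) * A a b from
          funext fun a => by ring, ← Finset.mul_sum, hcol]
      rw [Finset.sum_congr rfl fun b _ => this b]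
      rw [show (fun b => (c * g b) * (κ:ℝ)) = fun b => (c * (κ:ℝ)) * g b from
        funext fun b => by ring, ← Finset.mul_sum, hsg, mul_zero]
    have h4 : ∑ a, ∑ b, c ^ 2 * A a b = (κ : ℝ) * (n * c ^ 2) := by
      have : ∀ a : V₂, ∑ b, c ^ 2 * A a b = c ^ 2 * (κ : ℝ) := by
        intro a; rw [← Finset.mul_sum, hrow]
      rw [Finset.sum_congr rfl fun a _ => this a, Finset.sum_const, Finset.card_univ,
        nsmul_eq_mul, ← hn]
      ring
    rw [h2, h3, h4]
    ring
  have hray : μmin * Γ ≤ g ⬝ᵥ A.mulVec g := by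
    have := rayleigh_lower A (adjMatrix_herm H) μmin hmin2 g
    rw [← hΓ] at this
    exact this
  have hgAg : -2 * Γ ≤ g ⬝ᵥ A.mulVec g := by
    have : -2 * Γ ≤ μmin * Γ := mul_le_mul_of_nonneg_right hμ hΓ0
    linarith
  -- the key quadratic inequality
  have expand : (lam - q) * (lam * α ^ 2 + (lam + (κ:ℝ) + 2) * (n * c ^ 2)
      - q * (α + n * c) ^ 2) = ((lam - q) * α - q * (n * c)) ^ 2 := by
    linear_combination (n * c ^ 2) * hdet
  have key : 0 ≤ lam * α ^ 2 + (lam + (κ:ℝ) + 2) * (n * c ^ 2) - q * (α + n * c) ^ 2 := by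
    have h1 : 0 ≤ ((lam - q) * α - q * (n * c)) ^ 2 := sq_nonneg _
    rw [← expand] at h1
    have hlq : 0 < lam - q := by linarith
    exact nonneg_of_mul_nonneg_right h1 hlq
  have hlam0 : 0 < lam := lt_trans hq hlam
  have hlamΓ : 0 ≤ lam * Γ := mul_nonneg hlam0.le hΓ0
  rw [hFF, hh, ← hnc]
  nlinarith [key, hgAg, hlamΓ]

end Copy


lemma ones_quad {V₂ : Type*} [Fintype V₂] [DecidableEq V₂] (H : SimpleGraph V₂) [DecidableRel H.Adj]
    {κ : ℕ} (hreg : H.IsRegularOfDegree κ) :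
    (fun _ : V₂ => (1:ℝ)) ⬝ᵥ (H.adjMatrix ℝ).mulVec (fun _ : V₂ => (1:ℝ)) =
      (Fintype.card V₂ : ℝ) * (κ : ℝ) := by
  rw [dot_mulVec_expand']
  have h1 : ∀ a : V₂, ∑ b, (H.adjMatrix ℝ) a b * ((1:ℝ) * 1) = (κ : ℝ) := by
    intro a
    simp only [mul_one]
    exact adj_row_sum H hreg a
  rw [Finset.sum_congr rfl fun a _ => h1 a, Finset.sum_const, Finset.card_univ, nsmul_eq_mul]

set_option maxHeartbeats 2000000 in
/-- If `QEC(G) > 0`, `γ₃ = −2 − min ev(A_H) ≤ 0`, and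
`−2 − ψ_H⁻¹(QEC(G)) ∉ ev(A_H)`, then
`QEC(G⊙H) = ½[(n+1)QEC(G) − (κ+2) + √(((n+1)QEC(G) − (κ+2))² + 4(κ+2)QEC(G))]`. -/
theorem qec_corona_of_pos {V₁ V₂ : Type*} [Fintype V₁] [Fintype V₂] [DecidableEq V₂]
    (G : SimpleGraph V₁) (hG : G.Connected) (hm : 2 ≤ Fintype.card V₁)
    (H : SimpleGraph V₂) [DecidableRel H.Adj] (κ : ℕ) (hreg : H.IsRegularOfDegree κ)
    (μmin : ℝ)
    (hmin1 : ∃ x : V₂ → ℝ, x ≠ 0 ∧ (H.adjMatrix ℝ).mulVec x = μmin • x)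
    (hmin2 : ∀ θ : ℝ, (∃ x : V₂ → ℝ, x ≠ 0 ∧ (H.adjMatrix ℝ).mulVec x = θ • x) → μmin ≤ θ)
    (hq : 0 < QEC G) (hγ : -2 - μmin ≤ 0)
    (hspec : ¬ ∃ x : V₂ → ℝ, x ≠ 0 ∧ (H.adjMatrix ℝ).mulVec x =
      (-2 - ((1 / 2) * (((Fintype.card V₂ : ℝ) + 1) * QEC G - ((κ : ℝ) + 2) +
        Real.sqrt ((((Fintype.card V₂ : ℝ) + 1) * QEC G - ((κ : ℝ) + 2)) ^ 2
          + 4 * ((κ : ℝ) + 2) * QEC G)))) • x) :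
    QEC (corona G H) =
      (1 / 2) * (((Fintype.card V₂ : ℝ) + 1) * QEC G - ((κ : ℝ) + 2) +
        Real.sqrt ((((Fintype.card V₂ : ℝ) + 1) * QEC G - ((κ : ℝ) + 2)) ^ 2
          + 4 * ((κ : ℝ) + 2) * QEC G)) := by
  classical
  clear hspec
  -- V₂ is nonempty
  obtain ⟨x0, hx0, -⟩ := hmin1
  obtain ⟨a0, -⟩ := Function.ne_iff.mp hx0
  have hne2 : Nonempty V₂ := ⟨a0⟩
  have hμ : -2 ≤ μmin := by linarith
  set q : ℝ := QEC G with hqdef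
  set n : ℝ := (Fintype.card V₂ : ℝ) with hndef
  set σ : ℝ := Real.sqrt (((n + 1) * q - ((κ : ℝ) + 2)) ^ 2 + 4 * ((κ : ℝ) + 2) * q) with hσdef
  set lam : ℝ := (1 / 2) * ((n + 1) * q - ((κ : ℝ) + 2) + σ) with hlamdef
  show QEC (corona G H) = lam
  -- basic facts about `n`
  have hn1 : (1 : ℝ) ≤ n := by
    rw [hndef]
    exact_mod_cast Fintype.card_pos_iff.2 hne2
  have hn0 : n ≠ 0 := by linarith
  -- basic facts about `lam`
  have hκ0 : (0 : ℝ) ≤ (κ : ℝ) := Nat.cast_nonneg κ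
  have hdisc : 0 ≤ ((n + 1) * q - ((κ : ℝ) + 2)) ^ 2 + 4 * ((κ : ℝ) + 2) * q := by
    nlinarith [sq_nonneg ((n + 1) * q - ((κ : ℝ) + 2)), hq, hκ0]
  have hσ2 : σ * σ = ((n + 1) * q - ((κ : ℝ) + 2)) ^ 2 + 4 * ((κ : ℝ) + 2) * q := by
    rw [hσdef]; exact Real.mul_self_sqrt hdisc
  have hσ0 : 0 ≤ σ := by rw [hσdef]; exact Real.sqrt_nonneg _
  have habs : |(n + 1) * q - ((κ : ℝ) + 2)| < σ := by
    rw [hσdef]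
    rw [show |((n + 1) * q - ((κ : ℝ) + 2))| = Real.sqrt (((n + 1) * q - ((κ : ℝ) + 2))^2)
      from (Real.sqrt_sq_eq_abs _).symm]
    apply Real.sqrt_lt_sqrt (sq_nonneg _)
    nlinarith [hq, hκ0]
  have hlampos : 0 < lam := by
    rw [hlamdef]
    have := neg_abs_le ((n + 1) * q - ((κ : ℝ) + 2))
    linarith
  have hquad : lam * lam = ((n + 1) * q - ((κ : ℝ) + 2)) * lam + ((κ : ℝ) + 2) * q := by
    rw [hlamdef]
    linear_combination (1/4) * hσ2
  have hfac : (lam - q) * (lam + (κ : ℝ) + 2) = n * q * lam := by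
    linear_combination hquad
  have hlamq : q < lam := by
    by_contra hcon
    push_neg at hcon
    have h1 : 0 < q * lam := mul_pos hq hlampos
    have h2 : 0 < lam + (κ : ℝ) + 2 := by linarith
    nlinarith [hfac]
  have hdet : (lam - q) * (lam + (κ : ℝ) + 2 - q * n) = q ^ 2 * n := by
    linear_combination hfac
  have hcard2 : 2 ≤ Fintype.card (V₁ × Option V₂) := by
    rw [Fintype.card_prod, Fintype.card_option]
    calc 2 ≤ Fintype.card V₁ := hm
      _ = Fintype.card V₁ * 1 := (mul_one _).symm
      _ ≤ Fintype.card V₁ * (Fintype.card V₂ + 1) :=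
          Nat.mul_le_mul_left _ (Nat.le_add_left 1 _)
  ----------------------------------------------------------------
  -- Upper bound
  ----------------------------------------------------------------
  obtain ⟨f0, hf01, hf02, hf03⟩ := (qec_isGreatest (corona G H) hcard2).1
  have hquadf := corona_quad G H hG f0
  set β : V₁ → ℝ := fun u => f0 (u, none) + ∑ a, f0 (u, some a) with hβ
  set tDot : V₁ → ℝ := fun u => 2 * (∑ a, f0 (u, some a) * f0 (u, some a)) +
    (fun a => f0 (u, some a)) ⬝ᵥ (H.adjMatrix ℝ).mulVec (fun a => f0 (u, some a)) with htDot
  have hsumβ : ∑ u, β u = 0 := by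
    have h1 : ∑ p, f0 p = ∑ u, β u := sum_prod_option' f0
    rw [← h1, hf02]
  have hnorm : ∑ u, (f0 (u, none) * f0 (u, none) + ∑ a, f0 (u, some a) * f0 (u, some a)) = 1 := by
    have h1 := sum_prod_option' (fun p => f0 p * f0 p)
    rw [← h1, hf01]
  have hβq : β ⬝ᵥ (distMatrix G).mulVec β ≤ q * ∑ u, β u * β u := by
    have := qec_quad_le G hm β hsumβ
    rw [← hqdef] at this
    exact this
  have hcopy : ∀ u, q * (β u) ^ 2 ≤ lam * (f0 (u, none)) ^ 2 +
      (lam + 2) * (∑ a, f0 (u, some a) * f0 (u, some a)) +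
      (fun a => f0 (u, some a)) ⬝ᵥ (H.adjMatrix ℝ).mulVec (fun a => f0 (u, some a)) := by
    intro u
    have := copy_bound H κ hreg μmin hmin2 hμ hne2 q lam hq hlamq hdet
      (f0 (u, none)) (fun a => f0 (u, some a))
    exact this
  have hs2 : ∑ u, (q * (β u * β u) - tDot u) ≤ lam := by
    calc ∑ u, (q * (β u * β u) - tDot u)
        ≤ ∑ u, lam * (f0 (u, none) * f0 (u, none) + ∑ a, f0 (u, some a) * f0 (u, some a)) := by
          refine Finset.sum_le_sum fun u _ => ?_
          have h1 := hcopy u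
          rw [pow_two, pow_two] at h1
          simp only [htDot]
          linarith
      _ = lam * ∑ u, (f0 (u, none) * f0 (u, none) + ∑ a, f0 (u, some a) * f0 (u, some a)) :=
          (Finset.mul_sum _ _ _).symm
      _ = lam := by rw [hnorm, mul_one]
  have hupper : QEC (corona G H) ≤ lam := by
    rw [hf03, hquadf]
    have hmid : (∑ u, (f0 (u, none) + ∑ a, f0 (u, some a))) = 0 := hsumβ
    rw [hmid, mul_zero, add_zero]
    have h4 : q * (∑ u, β u * β u) - ∑ u, tDot u = ∑ u, (q * (β u * β u) - tDot u) := by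
      rw [Finset.mul_sum, Finset.sum_sub_distrib]
    linarith [hβq, hs2]
  ----------------------------------------------------------------
  -- Lower bound
  ----------------------------------------------------------------
  obtain ⟨g0, hg01, hg02, hg03⟩ := (qec_isGreatest G hm).1
  rw [← hqdef] at hg03
  set μ : ℝ := (lam - q) / n with hμdef
  have hnμ : n * μ = lam - q := by rw [hμdef]; field_simp
  set f1 : V₁ × Option V₂ → ℝ := fun p => (p.2.elim q (fun _ => μ)) * g0 p.1 with hf1def
  have hf1none : ∀ u, f1 (u, none) = q * g0 u := fun u => rfl
  have hf1some : ∀ u (a : V₂), f1 (u, some a) = μ * g0 u := fun u a => rfl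
  have hssum : ∀ u, ∑ a : V₂, f1 (u, some a) = n * (μ * g0 u) := by
    intro u
    rw [Finset.sum_congr rfl fun a _ => hf1some u a, Finset.sum_const, Finset.card_univ,
      nsmul_eq_mul, ← hndef]
  have hβ1 : ∀ u, f1 (u, none) + ∑ a : V₂, f1 (u, some a) = lam * g0 u := by
    intro u
    rw [hf1none, hssum]
    linear_combination (g0 u) * hnμ
  have hβfun : (fun u => f1 (u, none) + ∑ a, f1 (u, some a)) = lam • g0 :=
    funext fun u => by rw [hβ1]; rfl
  have hsum1 : ∑ p, f1 p = 0 := by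
    rw [sum_prod_option' f1, Finset.sum_congr rfl fun u _ => hβ1 u, ← Finset.mul_sum, hg02,
      mul_zero]
  have hnormf1 : ∑ p, f1 p * f1 p = q ^ 2 + n * μ ^ 2 := by
    rw [sum_prod_option' (fun p => f1 p * f1 p)]
    have h1 : ∀ u, f1 (u, none) * f1 (u, none) + ∑ a : V₂, f1 (u, some a) * f1 (u, some a) =
        (q ^ 2 + n * μ ^ 2) * (g0 u * g0 u) := by
      intro u
      rw [hf1none]
      have h2 : ∑ a : V₂, f1 (u, some a) * f1 (u, some a) = n * (μ * g0 u * (μ * g0 u)) := by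
        rw [Finset.sum_congr rfl fun a _ => by rw [hf1some u a], Finset.sum_const,
          Finset.card_univ, nsmul_eq_mul, ← hndef]
      rw [h2]
      ring
    rw [Finset.sum_congr rfl fun u _ => h1 u, ← Finset.mul_sum, hg01, mul_one]
  have hc0pos : 0 < q ^ 2 + n * μ ^ 2 := by
    have h1 : 0 ≤ n * μ ^ 2 := mul_nonneg (by linarith) (sq_nonneg μ)
    nlinarith [hq]
  have hquadf1 := corona_quad G H hG f1
  rw [hβfun] at hquadf1
  have hBB : (lam • g0) ⬝ᵥ (distMatrix G).mulVec (lam • g0) = lam * lam * q := by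
    rw [smul_quad, ← hg03]
  have hBsum : ∑ u, (lam • g0) u = 0 := by
    simp only [Pi.smul_apply, smul_eq_mul]
    rw [← Finset.mul_sum, hg02, mul_zero]
  have htDot1 : ∀ u : V₁, 2 * (∑ a, f1 (u, some a) * f1 (u, some a)) +
      (fun a => f1 (u, some a)) ⬝ᵥ (H.adjMatrix ℝ).mulVec (fun a => f1 (u, some a)) =
      (2 + (κ : ℝ)) * (n * μ ^ 2) * (g0 u * g0 u) := by
    intro u
    have h2 : ∑ a : V₂, f1 (u, some a) * f1 (u, some a) = n * (μ * g0 u * (μ * g0 u)) := by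
      rw [Finset.sum_congr rfl fun a _ => by rw [hf1some u a], Finset.sum_const,
        Finset.card_univ, nsmul_eq_mul, ← hndef]
    have hFC : (fun a : V₂ => f1 (u, some a)) = (μ * g0 u) • (fun _ : V₂ => (1:ℝ)) :=
      funext fun a => by rw [hf1some u a]; simp
    rw [h2, hFC, smul_quad, ones_quad H hreg, ← hndef]
    ring
  have hval : f1 ⬝ᵥ (distMatrix (corona G H)).mulVec f1 = lam * (q ^ 2 + n * μ ^ 2) := by
    rw [hquadf1, hBB, hBsum, mul_zero, add_zero]
    rw [Finset.sum_congr rfl fun u _ => htDot1 u, ← Finset.mul_sum, hg01, mul_one]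
    linear_combination (-(lam + (κ:ℝ) + 2) * μ - q * lam) * hnμ + (-μ) * hfac
  have hlower : lam ≤ QEC (corona G H) := by
    have hmem := mem_qec_set (corona G H) f1 (q ^ 2 + n * μ ^ 2) hc0pos hnormf1 hsum1
    rw [hval, mul_div_assoc, div_self (ne_of_gt hc0pos), mul_one] at hmem
    exact (qec_isGreatest (corona G H) hcard2).2 hmem
  exact le_antisymm hupper hlower
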